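/- arXiv:2303.09579 — 2 statements merged into one kernel-verified Lean document; each statement's English description precedes it below -/
import Mathlib

section
/- Let (X,d) be a compact metric space without isolated points and suppose f_{1,∞} converges uniformly to f. If (X, f_{1,∞}) is multi-transitive and the set of periodic points of f_{1,∞} is dense in X, then (X, f_{1,∞}) is N-sensitive. -/
open Metric Set MeasureTheory

/-- `nacomp f n = f_n ∘ ⋯ ∘ f_1` (and `nacomp f 0 = id`): the time-`n` map of the
non-autonomous system `f_{1,∞}`. -/
def nacomp {X : Type*} (f : ℕ → X → X) : ℕ → X → X
  | 0 => id
  | n + 1 => f (n + 1) ∘ nacomp f n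

/-- `compFrom f i k = f_{i+k-1} ∘ ⋯ ∘ f_i`, i.e. `f_i^k`. -/
def compFrom {X : Type*} (f : ℕ → X → X) (i : ℕ) : ℕ → X → X
  | 0 => id
  | k + 1 => f (i + k) ∘ compFrom f i k

/-- Multi-sensitivity of `f_{1,∞}` with respect to the vector `(v 0, …, v (r-1))`. -/
def multiSensWrt {X : Type*} [MetricSpace X] (f : ℕ → X → X) (r : ℕ) (v : ℕ → ℕ) : Prop :=
  ∃ δ > 0, ∀ U : ℕ → Set X, (∀ i < r, IsOpen (U i) ∧ (U i).Nonempty) →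
    ∃ n ≥ 1, ∀ i < r, ∃ x ∈ U i, ∃ y ∈ U i,
      δ < dist (nacomp f (n * v i) x) (nacomp f (n * v i) y)

/-- Strong multi-sensitivity: multi-sensitivity w.r.t. every vector in `ℕ^r`, every `r`. -/
def strongMultiSens {X : Type*} [MetricSpace X] (f : ℕ → X → X) : Prop :=
  ∀ r ≥ 1, ∀ v : ℕ → ℕ, (∀ i < r, 1 ≤ v i) → multiSensWrt f r v

/-- `𝒩`-sensitivity: multi-sensitivity w.r.t. `(1, 2, …, r)` for every `r`. -/
def nSens {X : Type*} [MetricSpace X] (f : ℕ → X → X) : Prop :=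
  ∀ r ≥ 1, multiSensWrt f r (fun i => i + 1)

/-- Sensitivity of the non-autonomous system. -/
def sens {X : Type*} [MetricSpace X] (f : ℕ → X → X) : Prop :=
  ∃ δ > 0, ∀ U : Set X, IsOpen U → U.Nonempty →
    ∃ n ≥ 1, ∃ x ∈ U, ∃ y ∈ U, δ < dist (nacomp f n x) (nacomp f n y)

/-- Multi-sensitivity of the non-autonomous system. -/
def multiSens {X : Type*} [MetricSpace X] (f : ℕ → X → X) : Prop :=
  ∃ δ > 0, ∀ r : ℕ, ∀ U : ℕ → Set X, (∀ i < r, IsOpen (U i) ∧ (U i).Nonempty) →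
    ∃ n ≥ 1, ∀ i < r, ∃ x ∈ U i, ∃ y ∈ U i, δ < dist (nacomp f n x) (nacomp f n y)

/-- Cofinite sensitivity: for some `δ > 0`, for every nonempty open `U` the set
`N_{f_{1,∞}}(U, δ)` is cofinite in `{1, 2, …}`. -/
def cofSens {X : Type*} [MetricSpace X] (f : ℕ → X → X) : Prop :=
  ∃ δ > 0, ∀ U : Set X, IsOpen U → U.Nonempty →
    {n : ℕ | 1 ≤ n ∧ ¬ ∃ x ∈ U, ∃ y ∈ U, δ < dist (nacomp f n x) (nacomp f n y)}.Finite

/-- Autonomous analogue of `multiSensWrt` for a single map `g`. -/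
def multiSensWrtAuto {X : Type*} [MetricSpace X] (g : X → X) (r : ℕ) (v : ℕ → ℕ) : Prop :=
  ∃ δ > 0, ∀ U : ℕ → Set X, (∀ i < r, IsOpen (U i) ∧ (U i).Nonempty) →
    ∃ n ≥ 1, ∀ i < r, ∃ x ∈ U i, ∃ y ∈ U i,
      δ < dist (g^[n * v i] x) (g^[n * v i] y)

def strongMultiSensAuto {X : Type*} [MetricSpace X] (g : X → X) : Prop :=
  ∀ r ≥ 1, ∀ v : ℕ → ℕ, (∀ i < r, 1 ≤ v i) → multiSensWrtAuto g r v

def nSensAuto {X : Type*} [MetricSpace X] (g : X → X) : Prop :=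
  ∀ r ≥ 1, multiSensWrtAuto g r (fun i => i + 1)

/-- `k`-periodicity of the non-autonomous system: `f_{j+kl} = f_j` for `l ≥ 1`, `1 ≤ j ≤ k`. -/
def kPeriodic {X : Type*} (f : ℕ → X → X) (k : ℕ) : Prop :=
  1 ≤ k ∧ ∀ l ≥ 1, ∀ j, 1 ≤ j → j ≤ k → f (j + k * l) = f j

/-- Multi-transitivity of the non-autonomous system. -/
def multiTrans {X : Type*} [TopologicalSpace X] (f : ℕ → X → X) : Prop :=
  ∀ m ≥ 1, ∀ U V : ℕ → Set X,
    (∀ i < m, IsOpen (U i) ∧ (U i).Nonempty ∧ IsOpen (V i) ∧ (V i).Nonempty) →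
    ∃ k ≥ 1, ∀ i < m, (nacomp f ((i + 1) * k) '' U i ∩ V i).Nonempty

/-- Multi-sensitivity w.r.t. a vector, for an explicit distance function `ρ`
(used for products equipped with the metric `√(d₁² + d₂²)`). -/
def multiSensWrtD {Z : Type*} [TopologicalSpace Z] (ρ : Z → Z → ℝ) (f : ℕ → Z → Z)
    (r : ℕ) (v : ℕ → ℕ) : Prop :=
  ∃ δ > 0, ∀ U : ℕ → Set Z, (∀ i < r, IsOpen (U i) ∧ (U i).Nonempty) →
    ∃ n ≥ 1, ∀ i < r, ∃ x ∈ U i, ∃ y ∈ U i,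
      δ < ρ (nacomp f (n * v i) x) (nacomp f (n * v i) y)

def strongMultiSensD {Z : Type*} [TopologicalSpace Z] (ρ : Z → Z → ℝ) (f : ℕ → Z → Z) : Prop :=
  ∀ r ≥ 1, ∀ v : ℕ → ℕ, (∀ i < r, 1 ≤ v i) → multiSensWrtD ρ f r v

def nSensD {Z : Type*} [TopologicalSpace Z] (ρ : Z → Z → ℝ) (f : ℕ → Z → Z) : Prop :=
  ∀ r ≥ 1, multiSensWrtD ρ f r (fun i => i + 1)

/-- The metric `√(d₁² + d₂²)` on a product of metric spaces. -/
noncomputable def prodDist {X Y : Type*} [MetricSpace X] [MetricSpace Y]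
    (p q : X × Y) : ℝ :=
  Real.sqrt (dist p.1 q.1 ^ 2 + dist p.2 q.2 ^ 2)

/-- `N_{f_{1,∞}^{[v]}}(U, δ)` for an explicit distance function `ρ`. -/
def NsetD {Z : Type*} (ρ : Z → Z → ℝ) (f : ℕ → Z → Z) (v : ℕ) (U : Set Z) (δ : ℝ) : Set ℕ :=
  {n : ℕ | 1 ≤ n ∧ ∃ x ∈ U, ∃ y ∈ U, δ < ρ (nacomp f (n * v) x) (nacomp f (n * v) y)}

/-- `N_{f_{1,∞}^{[v]} × g_{1,∞}^{[v']}}(U × U', δ)` for the product metric `√(d₁² + d₂²)`. -/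
noncomputable def NsetProd {X Y : Type*} [MetricSpace X] [MetricSpace Y]
    (f : ℕ → X → X) (g : ℕ → Y → Y) (v v' : ℕ) (U : Set X) (U' : Set Y) (δ : ℝ) : Set ℕ :=
  {n : ℕ | 1 ≤ n ∧ ∃ p ∈ U ×ˢ U', ∃ q ∈ U ×ˢ U',
    δ < prodDist (nacomp f (n * v) p.1, nacomp g (n * v') p.2)
                 (nacomp f (n * v) q.1, nacomp g (n * v') q.2)}

/-- on a compact metric space without isolated points, if `f_n → F`
uniformly, `(X, f_{1,∞})` is multi-transitive and has dense periodic points, then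
`(X, f_{1,∞})` is 𝒩-sensitive. -/
theorem stmt_18 {X : Type*} [MetricSpace X] [CompactSpace X]
    (hni : ∀ x : X, ¬ IsOpen ({x} : Set X))
    (f : ℕ → X → X) (F : X → X) (hf : ∀ n, Continuous (f n))
    (hunif : ∀ ε > 0, ∃ N, ∀ n ≥ N, ∀ x, dist (f n x) (F x) < ε)
    (ht : multiTrans f)
    (hdense : Dense {x : X | ∃ N ≥ 1, ∀ n ≥ 1, nacomp f (n * N) x = x}) :
    nSens f := by
  rcases isEmpty_or_nonempty X with hX | hX
  · intro r hr
    refine ⟨1, one_pos, fun U hU => absurd (hU 0 hr).2 ?_⟩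
    rintro ⟨x, -⟩
    exact IsEmpty.false x
  · obtain ⟨a⟩ := hX
    have hX' : Nonempty X := ⟨a⟩
    obtain ⟨b, hba⟩ : ∃ b : X, b ≠ a := by
      by_contra h
      push_neg at h
      refine hni a ?_
      have huniv : ({a} : Set X) = Set.univ := Set.eq_univ_of_forall (fun x => h x)
      rw [huniv]; exact isOpen_univ
    have hD : 0 < dist a b := dist_pos.mpr (Ne.symm hba)
    intro r hr
    refine ⟨dist a b / 4, by linarith, fun U hU => ?_⟩
    -- pick a periodic point in each U i
    have key : ∀ i : ℕ, ∃ p : X × ℕ, 1 ≤ p.2 ∧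
        (i < r → p.1 ∈ U i ∧ ∀ n ≥ 1, nacomp f (n * p.2) p.1 = p.1) := by
      intro i
      by_cases hi : i < r
      · obtain ⟨x, hxs, hxU⟩ := hdense.exists_mem_open (hU i hi).1 (hU i hi).2
        obtain ⟨N, hN1, hNper⟩ := hxs
        exact ⟨(x, N), hN1, fun _ => ⟨hxU, hNper⟩⟩
      · exact ⟨(a, 1), le_refl 1, fun h => absurd h hi⟩
    choose p hp1 hp2 using key
    set q : ℕ → X := fun i => (p i).1 with hqdef
    set Nf : ℕ → ℕ := fun i => (p i).2 with hNfdef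
    set Nt : ℕ := ∏ i ∈ Finset.range r, Nf i with hNtdef
    have hNtpos : 0 < Nt := Finset.prod_pos (fun i _ => hp1 i)
    have hdvd : ∀ i < r, Nf i ∣ Nt := fun i hi =>
      Finset.dvd_prod_of_mem _ (Finset.mem_range.mpr hi)
    -- target sets far from the periodic points
    set W : ℕ → Set X := fun i => {z | dist a b / 4 < dist z (q i)} with hWdef
    have hWopen : ∀ i, IsOpen (W i) := fun i =>
      isOpen_lt continuous_const (continuous_id.dist continuous_const)
    have hWne : ∀ i, (W i).Nonempty := by
      intro i
      by_cases h : dist a b / 4 < dist a (q i)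
      · exact ⟨a, h⟩
      · refine ⟨b, ?_⟩
        push_neg at h
        have h1 := dist_triangle a (q i) b
        have h2 : dist (q i) b = dist b (q i) := dist_comm _ _
        simp only [hWdef, Set.mem_setOf_eq]
        linarith
    set U' : ℕ → Set X := fun j =>
      if Nt ∣ (j + 1) ∧ (j + 1) / Nt - 1 < r then U ((j + 1) / Nt - 1) else Set.univ with hU'def
    set V' : ℕ → Set X := fun j =>
      if Nt ∣ (j + 1) ∧ (j + 1) / Nt - 1 < r then W ((j + 1) / Nt - 1) else Set.univ with hV'def
    have hcond : ∀ j < r * Nt,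
        IsOpen (U' j) ∧ (U' j).Nonempty ∧ IsOpen (V' j) ∧ (V' j).Nonempty := by
      intro j _
      simp only [hU'def, hV'def]
      by_cases h : Nt ∣ (j + 1) ∧ (j + 1) / Nt - 1 < r
      · rw [if_pos h, if_pos h]
        exact ⟨(hU _ h.2).1, (hU _ h.2).2, hWopen _, hWne _⟩
      · rw [if_neg h, if_neg h]
        exact ⟨isOpen_univ, Set.univ_nonempty, isOpen_univ, Set.univ_nonempty⟩
    obtain ⟨k, hk1, hkey⟩ := ht (r * Nt) (Nat.mul_pos hr hNtpos) U' V' hcond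
    refine ⟨Nt * k, Nat.mul_pos hNtpos hk1, fun i hi => ?_⟩
    have hj1 : (i + 1) * Nt - 1 + 1 = (i + 1) * Nt :=
      Nat.succ_pred_eq_of_pos (Nat.mul_pos (Nat.succ_pos i) hNtpos)
    have hj : (i + 1) * Nt - 1 < r * Nt := by
      have h2 : (i + 1) * Nt ≤ r * Nt := Nat.mul_le_mul_right _ hi
      omega
    have hdvdj : Nt ∣ (i + 1) * Nt := dvd_mul_left Nt (i + 1)
    have hidx : (i + 1) * Nt / Nt - 1 = i := by
      rw [Nat.mul_div_cancel _ hNtpos]; omega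
    have hU'j : U' ((i + 1) * Nt - 1) = U i := by
      simp only [hU'def, hj1, hidx]
      rw [if_pos ⟨hdvdj, hi⟩]
    have hV'j : V' ((i + 1) * Nt - 1) = W i := by
      simp only [hV'def, hj1, hidx]
      rw [if_pos ⟨hdvdj, hi⟩]
    have hmem := hkey _ hj
    rw [hU'j, hV'j, hj1] at hmem
    obtain ⟨z, ⟨y, hyU, hyz⟩, hzW⟩ := hmem
    refine ⟨y, hyU, q i, (hp2 i hi).1, ?_⟩
    have e1 : (i + 1) * Nt * k = Nt * k * (i + 1) := by ring
    have e2 : nacomp f (Nt * k * (i + 1)) y = z := by rw [← e1]; exact hyz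
    have e3 : nacomp f (Nt * k * (i + 1)) (q i) = q i := by
      have hdiv1 : 1 ≤ Nt / Nf i :=
        (Nat.one_le_div_iff (hp1 i)).mpr (Nat.le_of_dvd hNtpos (hdvd i hi))
      have hl : 1 ≤ k * (i + 1) * (Nt / Nf i) :=
        Nat.one_le_iff_ne_zero.mpr (by positivity)
      have hper := (hp2 i hi).2 (k * (i + 1) * (Nt / Nf i)) hl
      have earg : k * (i + 1) * (Nt / Nf i) * Nf i = Nt * k * (i + 1) := by
        rw [mul_assoc, Nat.div_mul_cancel (hdvd i hi)]; ring
      rwa [earg] at hper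
    show dist a b / 4 < dist (nacomp f (Nt * k * (i + 1)) y) (nacomp f (Nt * k * (i + 1)) (q i))
    rw [e2, e3]
    exact hzW
end

section
/- Let (X, f_{1,∞}) be a k-periodic non-autonomous system with g = f_k ∘ ⋯ ∘ f_1. If for the vector v' = (v_1, 2v_1, …, kv_1, v_2, 2v_2, …, kv_2, …, v_r, 2v_r, …, kv_r) ∈ ℕ^{rk} and some δ > 0 the system (X, f_{1,∞}) is multi-sensitive with respect to v' with constant δ, then the autonomous system (X, g) is multi-sensitive with respect to the vector (v_1,…,v_r) with constant δ. -/
open Metric Set MeasureTheory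

lemma nacomp_block {X : Type*} (f : ℕ → X → X) (k : ℕ) (hper : kPeriodic f k)
    (m : ℕ) : ∀ t ≤ k, nacomp f (k * m + t) = nacomp f t ∘ nacomp f (k * m) := by
  intro t ht
  rcases Nat.eq_zero_or_pos m with rfl | hm
  · simp [nacomp]
  induction t with
  | zero => simp [nacomp]
  | succ s ih =>
    have hs : s ≤ k := Nat.le_of_succ_le ht
    have : f (k * m + s + 1) = f (s + 1) := by
      have := hper.2 m hm (s + 1) (Nat.succ_le_succ (Nat.zero_le _)) ht
      rw [← this]; ring_nf
    show f (k * m + s + 1) ∘ nacomp f (k * m + s) = (f (s+1) ∘ nacomp f s) ∘ nacomp f (k * m)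
    rw [this, ih hs]; rfl

lemma nacomp_mul {X : Type*} (f : ℕ → X → X) (k : ℕ) (hper : kPeriodic f k)
    (m : ℕ) : nacomp f (k * m) = (nacomp f k)^[m] := by
  induction m with
  | zero => simp [nacomp]
  | succ m ih =>
    have : k * (m + 1) = k * m + k := by ring
    rw [this, nacomp_block f k hper m k le_rfl, ih, Function.iterate_succ']

/-- core step of Lemma 3.5. For a `k`-periodic system, multi-sensitivity
w.r.t. the expanded vector `v' = (v₁, 2v₁, …, kv₁, …, v_r, 2v_r, …, kv_r)` with constant
`δ` yields multi-sensitivity of `g = f_k ∘ ⋯ ∘ f_1` w.r.t. `(v₁, …, v_r)` with constant `δ`. -/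
theorem stmt_19 {X : Type*} [MetricSpace X] [CompactSpace X] (f : ℕ → X → X)
    (hf : ∀ n, Continuous (f n)) (k : ℕ) (hper : kPeriodic f k)
    (r : ℕ) (hr : 1 ≤ r) (v : ℕ → ℕ) (hv : ∀ i < r, 1 ≤ v i) (δ : ℝ) (hδ : 0 < δ)
    (h : ∀ U : ℕ → Set X, (∀ i < r * k, IsOpen (U i) ∧ (U i).Nonempty) →
      ∃ n ≥ 1, ∀ i < r * k, ∃ x ∈ U i, ∃ y ∈ U i,
        δ < dist (nacomp f (n * ((i % k + 1) * v (i / k))) x)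
                 (nacomp f (n * ((i % k + 1) * v (i / k))) y)) :
    ∀ U : ℕ → Set X, (∀ i < r, IsOpen (U i) ∧ (U i).Nonempty) →
      ∃ n ≥ 1, ∀ i < r, ∃ x ∈ U i, ∃ y ∈ U i,
        δ < dist ((nacomp f k)^[n * v i] x) ((nacomp f k)^[n * v i] y) := by
  intro U hU
  have hk : 1 ≤ k := hper.1
  obtain ⟨n, hn1, hn⟩ := h (fun i => U (i / k)) (by
    intro i hi
    exact hU (i / k) (Nat.div_lt_of_lt_mul (by rwa [mul_comm] at hi)))
  refine ⟨n, hn1, fun j hj => ?_⟩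
  have hidx : j * k + (k - 1) < r * k := by
    have : j * k + (k - 1) < j * k + k := by omega
    calc j * k + (k - 1) < j * k + k := this
      _ = (j + 1) * k := by ring
      _ ≤ r * k := Nat.mul_le_mul_right k hj
  obtain ⟨x, hx, y, hy, hd⟩ := hn (j * k + (k - 1)) hidx
  have hmod : (j * k + (k - 1)) % k = k - 1 := by
    rw [add_comm, Nat.add_mul_mod_self_right, Nat.mod_eq_of_lt (by omega)]
  have hdiv : (j * k + (k - 1)) / k = j := by
    rw [add_comm, Nat.add_mul_div_right _ _ (by omega : 0 < k), Nat.div_eq_of_lt (by omega)]; omega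
  simp only [hmod, hdiv] at hd hx hy
  have hexp : n * ((k - 1 + 1) * v j) = k * (n * v j) := by
    have : k - 1 + 1 = k := by omega
    rw [this]; ring
  rw [hexp, nacomp_mul f k hper] at hd
  exact ⟨x, hx, y, hy, hd⟩
end
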